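/- Suppose real numbers p ∈ (0,1), ε ∈ (0,1), P_b ∈ [0,p) and a_R ≥ 1 satisfy P_b ≥ -ε(1-p) + (1-(1-ε)(1-p))(1-p)^{a_R}. Then a_R ≥ ln(1 + (p - P_b)/((1-p)ε + P_b)) / ln(1/(1-p)). -/

import Mathlib

theorem stmt_17 (p ε Pb aR : ℝ)
    (hp0 : 0 < p) (hp1 : p < 1) (hε0 : 0 < ε) (hε1 : ε < 1)
    (hPb0 : 0 ≤ Pb) (hPbp : Pb < p) (haR : 1 ≤ aR)
    (hmain : Pb ≥ -ε * (1 - p) + (1 - (1 - ε) * (1 - p)) * (1 - p) ^ aR) :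
    aR ≥ Real.log (1 + (p - Pb) / ((1 - p) * ε + Pb)) / Real.log (1 / (1 - p)) := by
  set q : ℝ := 1 - p with hq
  have hq0 : 0 < q := by simp [hq]; linarith
  have hq1 : q < 1 := by simp [hq]; linarith
  have hden : 0 < ε * q + Pb := by positivity
  have hnum : 0 < ε * q + p := by positivity
  have hA : 1 + (p - Pb) / ((1 - p) * ε + Pb) = (ε * q + p) / (ε * q + Pb) := by
    have hd : (1 - p) * ε + Pb ≠ 0 := ne_of_gt (by have := mul_pos (sub_pos.2 hp1) hε0; linarith)
    rw [eq_div_iff hden.ne', hq]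
    have hE : ε * (1 - p) + Pb = (1 - p) * ε + Pb := by ring
    rw [hE, add_mul, div_mul_cancel₀ _ hd]
    ring
  have hL : 0 < Real.log (1 / q) := by
    rw [one_div, Real.log_inv]
    have := Real.log_neg hq0 hq1
    linarith
  rw [hA, ge_iff_le, div_le_iff₀ hL]
  -- key inequality: q ^ aR ≤ (ε*q + Pb) / (ε*q + p)
  have hkey : q ^ aR ≤ (ε * q + Pb) / (ε * q + p) := by
    rw [le_div_iff₀ hnum]
    have h1 : (1 : ℝ) - (1 - ε) * (1 - p) = p + ε * q := by rw [hq]; ring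
    have := hmain
    rw [h1] at this
    nlinarith [Real.rpow_pos_of_pos hq0 aR]
  have hpow : 0 < q ^ aR := Real.rpow_pos_of_pos hq0 aR
  have hlog := Real.log_le_log hpow hkey
  rw [Real.log_rpow hq0, Real.log_div (ne_of_gt hden) (ne_of_gt hnum)] at hlog
  rw [Real.log_div (ne_of_gt hnum) (ne_of_gt hden), one_div, Real.log_inv]
  nlinarith [Real.log_neg hq0 hq1]
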